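/- Let p : ℝ → ℝ be measurable with 0 ≤ p(z) ≤ M for some M and all z, let τ > 0, define Z(c) = ∫_ℝ p(z)·N(z|c,τ) dz with Z(c) > 0 for every c, and let ẑ(c) = ( ∫_ℝ z·p(z)·N(z|c,τ) dz ) / Z(c). Then ẑ is differentiable on ℝ with d/dc ẑ(c) = τ^z(c) / τ, where τ^z(c) = ( ∫_ℝ (z − ẑ(c))² · p(z) · N(z|c,τ) dz ) / Z(c) is the posterior variance; consequently ∂/∂c g_out(c,τ,y) = (1/τ)·(τ^z(c)/τ − 1), the expression used for τ_t^s = −∂g_out/∂c in the GAMP algorithm. -/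

import Mathlib

open MeasureTheory

/-- The univariate Gaussian density `N(x | μ, v) = (2πv)^{-1/2} exp(−(x−μ)²/(2v))`. -/
noncomputable def gaussianPDF (x μ v : ℝ) : ℝ :=
  (2 * Real.pi * v) ^ (-(1 : ℝ) / 2) * Real.exp (-(x - μ) ^ 2 / (2 * v))

lemma gauss_meas (c τ : ℝ) : Measurable (fun z : ℝ => gaussianPDF z c τ) := by
  unfold gaussianPDF; fun_prop

lemma gauss_nonneg {τ : ℝ} (hτ : 0 < τ) (z c : ℝ) : 0 ≤ gaussianPDF z c τ := by
  unfold gaussianPDF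
  have : (0:ℝ) < (2 * Real.pi * τ) ^ (-(1 : ℝ) / 2) :=
    Real.rpow_pos_of_pos (by positivity) _
  positivity

lemma integrable_sq_gauss {b : ℝ} (hb : 0 < b) (c : ℝ) :
    Integrable (fun z : ℝ => (z - c)^2 * Real.exp (-b * (z - c)^2)) := by
  have h := integrable_rpow_mul_exp_neg_mul_sq hb (show (-1:ℝ) < 2 by norm_num)
  have h2 : Integrable (fun x : ℝ => x^2 * Real.exp (-b * x^2)) := by
    refine h.congr (Filter.Eventually.of_forall fun x => ?_)
    simp only [Real.rpow_two]
  exact h2.comp_sub_right c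

lemma integrable_mul_gauss {τ : ℝ} (hτ : 0 < τ) {q : ℝ → ℝ} (hq : Measurable q)
    {A B : ℝ} (c : ℝ) (hqbd : ∀ z, |q z| ≤ A + B * (z - c)^2) :
    Integrable (fun z : ℝ => q z * gaussianPDF z c τ) := by
  set K := (2 * Real.pi * τ) ^ (-(1 : ℝ) / 2) with hK
  have hKpos : 0 < K := Real.rpow_pos_of_pos (by positivity) _
  have hb : 0 < 1/(2*τ) := by positivity
  have hint : Integrable (fun z : ℝ =>
      (A + B * (z-c)^2) * (K * Real.exp (-(1/(2*τ)) * (z-c)^2))) := by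
    have h0 : Integrable (fun z : ℝ => Real.exp (-(1/(2*τ)) * (z-c)^2)) :=
      (integrable_exp_neg_mul_sq hb).comp_sub_right c
    have h2 := integrable_sq_gauss hb c
    have hsum := (h0.const_mul (A*K)).add (h2.const_mul (B*K))
    have e : (fun z : ℝ => (A + B * (z-c)^2) * (K * Real.exp (-(1/(2*τ)) * (z-c)^2)))
        = fun z : ℝ => (A*K) * Real.exp (-(1/(2*τ)) * (z-c)^2)
            + (B*K) * ((z-c)^2 * Real.exp (-(1/(2*τ)) * (z-c)^2)) := by
      funext z; ring
    rwa [e]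
  refine hint.mono' ((hq.mul (gauss_meas c τ)).aestronglyMeasurable) ?_
  filter_upwards with z
  have hexp : Real.exp (-(z-c)^2/(2*τ)) = Real.exp (-(1/(2*τ)) * (z-c)^2) := by
    ring_nf
  have hg : gaussianPDF z c τ = K * Real.exp (-(1/(2*τ)) * (z-c)^2) := by
    unfold gaussianPDF; rw [← hexp, hK]
  have hge : 0 ≤ K * Real.exp (-(1/(2*τ)) * (z-c)^2) := by positivity
  rw [norm_mul, hg, Real.norm_eq_abs, Real.norm_eq_abs, abs_of_nonneg hge]
  exact mul_le_mul_of_nonneg_right (hqbd z) hge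

lemma abs_le_one_add_sq (x : ℝ) : |x| ≤ 1 + x^2 := by
  rcases le_or_gt (|x|) 1 with h | h
  · nlinarith [sq_nonneg x]
  · nlinarith [sq_abs x]

lemma sq_mul_exp_le {τ x : ℝ} (hτ : 0 < τ) :
    x^2 * Real.exp (-x^2/(2*τ)) ≤ 4*τ * Real.exp (-x^2/(4*τ)) := by
  have h1 : x^2/(4*τ) ≤ Real.exp (x^2/(4*τ)) :=
    le_trans (by linarith [Real.add_one_le_exp (x^2/(4*τ))]) (le_refl _)
  have h2 : x^2 ≤ 4*τ * Real.exp (x^2/(4*τ)) := by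
    have := mul_le_mul_of_nonneg_left h1 (by positivity : (0:ℝ) ≤ 4*τ)
    calc x^2 = 4*τ * (x^2/(4*τ)) := by field_simp
    _ ≤ 4*τ * Real.exp (x^2/(4*τ)) := this
  have hkey : x^2 * Real.exp (-x^2/(2*τ)) ≤ 4*τ * Real.exp (x^2/(4*τ)) * Real.exp (-x^2/(2*τ)) :=
    mul_le_mul_of_nonneg_right h2 (Real.exp_nonneg _)
  calc x^2 * Real.exp (-x^2/(2*τ)) ≤ 4*τ * Real.exp (x^2/(4*τ)) * Real.exp (-x^2/(2*τ)) := hkey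
  _ = 4*τ * Real.exp (-x^2/(4*τ)) := by
      rw [mul_assoc, ← Real.exp_add]; ring_nf

set_option maxHeartbeats 1000000 in
lemma hasDerivAt_integral_gauss {τ : ℝ} (hτ : 0 < τ) {q : ℝ → ℝ} (hq : Measurable q)
    {A B : ℝ} (hA : 0 ≤ A) (hB : 0 ≤ B) (hbd : ∀ z, |q z| ≤ A + B * |z|) (c₀ : ℝ) :
    HasDerivAt (fun c => ∫ z : ℝ, q z * gaussianPDF z c τ)
      (∫ z : ℝ, q z * gaussianPDF z c₀ τ * ((z - c₀)/τ)) c₀ := by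
  have hKpos : 0 < (2 * Real.pi * τ) ^ (-(1 : ℝ) / 2) :=
    Real.rpow_pos_of_pos (by positivity) _
  set K := (2 * Real.pi * τ) ^ (-(1 : ℝ) / 2) with hKdef
  set A₁ := A + B * (|c₀| + 1) with hA₁def
  have hA₁ : 0 ≤ A₁ := by positivity
  set D := (K/τ) * (A₁ + (A₁ + B) * (4*τ)) * Real.exp (1/(4*τ)) with hDdef
  -- integrability of q at any point c
  have hqbd : ∀ c : ℝ, ∀ z : ℝ, |q z| ≤ (A + B * |c| + B) + B * (z - c)^2 := by
    intro c z
    have h1 : |z| - |c| ≤ |z - c| := abs_sub_abs_le_abs_sub z c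
    have h2 : |z - c| ≤ 1 + (z - c)^2 := abs_le_one_add_sq (z - c)
    nlinarith [hbd z, abs_nonneg z, abs_nonneg c]
  have hqint : ∀ c : ℝ, Integrable (fun z : ℝ => q z * gaussianPDF z c τ) :=
    fun c => integrable_mul_gauss hτ hq c (hqbd c)
  have key := hasDerivAt_integral_of_dominated_loc_of_deriv_le
    (F := fun c z => q z * gaussianPDF z c τ)
    (F' := fun c z => q z * gaussianPDF z c τ * ((z - c)/τ))
    (bound := fun z => D * Real.exp (-(z - c₀)^2/(8*τ)))
    (x₀ := c₀) (s := Metric.ball c₀ 1) (Metric.ball_mem_nhds c₀ one_pos)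
    (Filter.Eventually.of_forall fun c => (hq.mul (gauss_meas c τ)).aestronglyMeasurable)
    (hqint c₀)
    (((hq.mul (gauss_meas c₀ τ)).mul (by fun_prop)).aestronglyMeasurable)
    ?bound ?boundint ?diff
  · exact key.2
  case bound =>
    filter_upwards with z c hc
    rw [Metric.mem_ball, Real.dist_eq] at hc
    have hE2 : (0:ℝ) < Real.exp (-(z-c)^2/(2*τ)) := Real.exp_pos _
    have hE4 : (0:ℝ) < Real.exp (-(z-c)^2/(4*τ)) := Real.exp_pos _
    have hE8 : (0:ℝ) < Real.exp (-(z-c₀)^2/(8*τ)) := Real.exp_pos _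
    have f1 : Real.exp (-(z-c)^2/(2*τ)) ≤ Real.exp (-(z-c)^2/(4*τ)) := by
      apply Real.exp_le_exp.2
      rw [div_le_div_iff₀ (by positivity) (by positivity)]
      nlinarith [sq_nonneg (z-c)]
    have f2 := sq_mul_exp_le (x := z - c) hτ
    have f3 : Real.exp (-(z-c)^2/(4*τ)) ≤ Real.exp (1/(4*τ)) * Real.exp (-(z-c₀)^2/(8*τ)) := by
      rw [← Real.exp_add]
      apply Real.exp_le_exp.2
      have hcc : (c - c₀)^2 ≤ 1 := by nlinarith [sq_abs (c - c₀), abs_nonneg (c - c₀)]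
      have h8 : (z - c₀)^2 ≤ 2*(z-c)^2 + 2 := by nlinarith [sq_nonneg ((z - c) - (c - c₀)), hcc]
      have heq : 1/(4*τ) + -(z-c₀)^2/(8*τ) - (-(z-c)^2/(4*τ))
          = (2 + 2*(z-c)^2 - (z-c₀)^2)/(8*τ) := by field_simp; ring
      have hge : (0:ℝ) ≤ (2 + 2*(z-c)^2 - (z-c₀)^2)/(8*τ) :=
        div_nonneg (by linarith) (by positivity)
      linarith [heq ▸ hge]
    have hqz : |q z| ≤ A₁ + B * |z - c| := by
      have h1 : |z| - |c| ≤ |z - c| := abs_sub_abs_le_abs_sub z c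
      have h2 : |c| - |c₀| ≤ |c - c₀| := abs_sub_abs_le_abs_sub c c₀
      have hz : |z| ≤ |z - c| + (|c₀| + 1) := by linarith
      have hBz := mul_le_mul_of_nonneg_left hz hB
      have := hbd z
      rw [hA₁def]
      linarith [hBz]
    have h5 : |q z| * |z - c| ≤ A₁ + (A₁ + B) * (z-c)^2 := by
      have t1 : |q z| * |z - c| ≤ A₁ * |z - c| + B * (z - c)^2 := by
        calc |q z| * |z - c| ≤ (A₁ + B * |z - c|) * |z - c| :=
              mul_le_mul_of_nonneg_right hqz (abs_nonneg (z - c))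
          _ = A₁ * |z - c| + B * (z - c)^2 := by
              rw [add_mul, mul_assoc, abs_mul_abs_self]; ring
      have t2 : A₁ * |z - c| ≤ A₁ * (1 + (z - c)^2) :=
        mul_le_mul_of_nonneg_left (abs_le_one_add_sq (z - c)) hA₁
      linarith
    have hnorm : ‖q z * gaussianPDF z c τ * ((z - c)/τ)‖
        = (K/τ) * (|q z| * |z - c|) * Real.exp (-(z-c)^2/(2*τ)) := by
      unfold gaussianPDF
      rw [norm_mul, norm_mul, Real.norm_eq_abs, Real.norm_eq_abs, Real.norm_eq_abs,
        abs_mul, abs_of_pos hKpos, abs_of_pos hE2, abs_div, abs_of_pos hτ]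
      ring
    rw [hnorm]
    calc (K/τ) * (|q z| * |z - c|) * Real.exp (-(z-c)^2/(2*τ))
        ≤ (K/τ) * (A₁ + (A₁ + B) * (z-c)^2) * Real.exp (-(z-c)^2/(2*τ)) := by
          apply mul_le_mul_of_nonneg_right _ hE2.le
          exact mul_le_mul_of_nonneg_left h5 (by positivity)
      _ = (K/τ) * A₁ * Real.exp (-(z-c)^2/(2*τ))
          + (K/τ) * (A₁ + B) * ((z-c)^2 * Real.exp (-(z-c)^2/(2*τ))) := by ring
      _ ≤ (K/τ) * A₁ * Real.exp (-(z-c)^2/(4*τ))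
          + (K/τ) * (A₁ + B) * (4*τ * Real.exp (-(z-c)^2/(4*τ))) := by
          gcongr <;> positivity
      _ = (K/τ) * (A₁ + (A₁ + B) * (4*τ)) * Real.exp (-(z-c)^2/(4*τ)) := by ring
      _ ≤ (K/τ) * (A₁ + (A₁ + B) * (4*τ)) * (Real.exp (1/(4*τ)) * Real.exp (-(z-c₀)^2/(8*τ))) := by
          apply mul_le_mul_of_nonneg_left f3 (by positivity)
      _ = D * Real.exp (-(z - c₀)^2/(8*τ)) := by rw [hDdef]; ring
  case boundint =>
    have h8b : (0:ℝ) < 1/(8*τ) := by positivity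
    have := ((integrable_exp_neg_mul_sq h8b).comp_sub_right c₀).const_mul D
    refine this.congr (Filter.Eventually.of_forall fun z => ?_)
    show D * Real.exp (-(1/(8*τ)) * (z - c₀)^2) = _
    rw [show -(1/(8*τ)) * (z - c₀)^2 = -(z - c₀)^2/(8*τ) by ring]
  case diff =>
    filter_upwards with z c _
    have h1 : HasDerivAt (fun c : ℝ => -(z - c)^2/(2*τ)) ((z - c)/τ) c := by
      have h0 : HasDerivAt (fun c : ℝ => z - c) (-1) c := (hasDerivAt_id c).const_sub z
      have h2 := (h0.pow 2).neg.div_const (2*τ)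
      refine h2.congr_deriv ?_
      field_simp
      ring
    have h4 := ((h1.exp.const_mul K).const_mul (q z))
    simp only [gaussianPDF]
    rw [← hKdef]
    refine h4.congr_deriv ?_
    ring

/-- The normalization `Z(c) = ∫ p(z)·N(z|c,τ) dz`. -/
noncomputable def Zfun (p : ℝ → ℝ) (τ c : ℝ) : ℝ :=
  ∫ z : ℝ, p z * gaussianPDF z c τ

/-- The posterior mean `ẑ(c)` of the tilted density `p(z)·N(z|c,τ)/Z(c)`. -/
noncomputable def zhat (p : ℝ → ℝ) (τ c : ℝ) : ℝ :=
  (∫ z : ℝ, z * p z * gaussianPDF z c τ) / Zfun p τ c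

/-- The posterior variance `τᶻ(c)` of the tilted density. -/
noncomputable def tauZ (p : ℝ → ℝ) (τ c : ℝ) : ℝ :=
  (∫ z : ℝ, (z - zhat p τ c) ^ 2 * p z * gaussianPDF z c τ) / Zfun p τ c

set_option maxHeartbeats 1000000 in
/-- `d/dc ẑ(c) = τᶻ(c)/τ`, hence `∂/∂c g_out(c,τ,y) = (1/τ)(τᶻ(c)/τ − 1)`,
the expression used for `τᵗˢ = −∂g_out/∂c` in the GAMP algorithm. -/
theorem deriv_zhat_eq_posterior_variance
    (p : ℝ → ℝ) (hp : Measurable p) (M : ℝ) (hbd : ∀ z, 0 ≤ p z ∧ p z ≤ M)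
    (τ : ℝ) (hτ : 0 < τ) (hZ : ∀ c : ℝ, 0 < Zfun p τ c) :
    ∀ c : ℝ,
      HasDerivAt (fun c : ℝ => zhat p τ c) (tauZ p τ c / τ) c ∧
      HasDerivAt (fun c : ℝ => (zhat p τ c - c) / τ)
        ((1 / τ) * (tauZ p τ c / τ - 1)) c := by
  intro c
  have hM0 : 0 ≤ M := le_trans (hbd 0).1 (hbd 0).2
  have hpabs : ∀ z, |p z| = p z := fun z => abs_of_nonneg (hbd z).1
  -- integrability of the three moments
  have hI0 : Integrable (fun z : ℝ => p z * gaussianPDF z c τ) := by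
    apply integrable_mul_gauss hτ hp c (A := M) (B := 0)
    intro z
    rw [hpabs z]
    nlinarith [(hbd z).2]
  have hI1 : Integrable (fun z : ℝ => z * p z * gaussianPDF z c τ) := by
    apply integrable_mul_gauss hτ (show Measurable (fun z : ℝ => z * p z) from measurable_id.mul hp) c (A := M * |c| + M) (B := M)
    intro z
    have h1 : |z| - |c| ≤ |z - c| := abs_sub_abs_le_abs_sub z c
    have h2 : |z - c| ≤ 1 + (z - c)^2 := abs_le_one_add_sq (z - c)
    have h3 : |z * p z| = |z| * p z := by rw [abs_mul, hpabs z]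
    have h4 : |z| * p z ≤ |z| * M := mul_le_mul_of_nonneg_left (hbd z).2 (abs_nonneg z)
    have h5 : |z| * M ≤ (|c| + 1 + (z - c)^2) * M := by
      apply mul_le_mul_of_nonneg_right _ hM0
      linarith
    rw [h3]
    nlinarith [h4, h5]
  have hI2 : Integrable (fun z : ℝ => z^2 * p z * gaussianPDF z c τ) := by
    apply integrable_mul_gauss hτ (show Measurable (fun z : ℝ => z^2 * p z) from (measurable_id.pow_const 2).mul hp) c
      (A := 2 * c^2 * M) (B := 2 * M)
    intro z
    have h1 : z^2 ≤ 2*(z - c)^2 + 2*c^2 := by nlinarith [sq_nonneg ((z - c) - c)]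
    have h3 : |z^2 * p z| = z^2 * p z := by
      rw [abs_mul, hpabs z, abs_of_nonneg (sq_nonneg z)]
    have h4 : z^2 * p z ≤ z^2 * M := mul_le_mul_of_nonneg_left (hbd z).2 (sq_nonneg z)
    have h5 : z^2 * M ≤ (2*(z - c)^2 + 2*c^2) * M := mul_le_mul_of_nonneg_right h1 hM0
    rw [h3]
    nlinarith [h4, h5]
  -- derivatives of numerator and denominator
  have hZd := hasDerivAt_integral_gauss hτ hp (A := M) (B := 0) hM0 le_rfl
    (fun z => by rw [hpabs z]; linarith [(hbd z).2]) c
  have hNd := hasDerivAt_integral_gauss hτ (show Measurable (fun z : ℝ => z * p z) from measurable_id.mul hp) (A := 0) (B := M) le_rfl hM0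
    (fun z => by
      rw [abs_mul, hpabs z]
      have := mul_le_mul_of_nonneg_left (hbd z).2 (abs_nonneg z)
      linarith) c
  beta_reduce at hZd hNd
  have eZ : (∫ z : ℝ, p z * gaussianPDF z c τ * ((z - c)/τ))
      = (1/τ) * (∫ z : ℝ, z * p z * gaussianPDF z c τ)
        - (c/τ) * (∫ z : ℝ, p z * gaussianPDF z c τ) := by
    rw [show (fun z : ℝ => p z * gaussianPDF z c τ * ((z - c)/τ))
        = fun z : ℝ => (1/τ) * (z * p z * gaussianPDF z c τ)
          - (c/τ) * (p z * gaussianPDF z c τ) from funext fun z => by ring,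
      integral_sub (hI1.const_mul (1/τ)) (hI0.const_mul (c/τ)),
      integral_const_mul _ _, integral_const_mul _ _]
  have eN : (∫ z : ℝ, z * p z * gaussianPDF z c τ * ((z - c)/τ))
      = (1/τ) * (∫ z : ℝ, z^2 * p z * gaussianPDF z c τ)
        - (c/τ) * (∫ z : ℝ, z * p z * gaussianPDF z c τ) := by
    rw [show (fun z : ℝ => z * p z * gaussianPDF z c τ * ((z - c)/τ))
        = fun z : ℝ => (1/τ) * (z^2 * p z * gaussianPDF z c τ)
          - (c/τ) * (z * p z * gaussianPDF z c τ) from funext fun z => by ring,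
      integral_sub (hI2.const_mul (1/τ)) (hI1.const_mul (c/τ)),
      integral_const_mul _ _, integral_const_mul _ _]
  rw [eZ] at hZd
  rw [eN] at hNd
  have hzne : Zfun p τ c ≠ 0 := (hZ c).ne'
  have hDiv := hNd.div hZd hzne
  -- expansion of the variance integral
  have hIv : Integrable (fun z : ℝ => (z - zhat p τ c)^2 * p z * gaussianPDF z c τ) := by
    apply integrable_mul_gauss hτ (show Measurable (fun z : ℝ => (z - zhat p τ c)^2 * p z) from ((measurable_id.sub_const (zhat p τ c)).pow_const 2).mul hp) c
      (A := 2*(c - zhat p τ c)^2*M) (B := 2*M)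
    intro z
    have h1 : (z - zhat p τ c)^2 ≤ 2*(z - c)^2 + 2*(c - zhat p τ c)^2 := by
      nlinarith [sq_nonneg ((z - c) - (c - zhat p τ c))]
    have h3 : |(z - zhat p τ c)^2 * p z| = (z - zhat p τ c)^2 * p z := by
      rw [abs_mul, hpabs z, abs_of_nonneg (sq_nonneg _)]
    have h4 : (z - zhat p τ c)^2 * p z ≤ (z - zhat p τ c)^2 * M :=
      mul_le_mul_of_nonneg_left (hbd z).2 (sq_nonneg _)
    have h5 : (z - zhat p τ c)^2 * M ≤ (2*(z - c)^2 + 2*(c - zhat p τ c)^2) * M :=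
      mul_le_mul_of_nonneg_right h1 hM0
    rw [h3]
    nlinarith [h4, h5]
  have hexp : (∫ z : ℝ, (z - zhat p τ c)^2 * p z * gaussianPDF z c τ)
      = (∫ z : ℝ, z^2 * p z * gaussianPDF z c τ)
        - 2*(zhat p τ c)*(∫ z : ℝ, z * p z * gaussianPDF z c τ)
        + (zhat p τ c)^2*(∫ z : ℝ, p z * gaussianPDF z c τ) := by
    rw [show (fun z : ℝ => (z - zhat p τ c)^2 * p z * gaussianPDF z c τ)
        = fun z : ℝ => (z^2 * p z * gaussianPDF z c τ)
          - (2*(zhat p τ c)) * (z * p z * gaussianPDF z c τ)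
          + ((zhat p τ c)^2) * (p z * gaussianPDF z c τ) from funext fun z => by ring,
      integral_add (show Integrable (fun z : ℝ => z^2 * p z * gaussianPDF z c τ
          - (2*(zhat p τ c)) * (z * p z * gaussianPDF z c τ)) volume
        from hI2.sub (hI1.const_mul (2*(zhat p τ c)))) (hI0.const_mul ((zhat p τ c)^2)),
      integral_sub hI2 (hI1.const_mul (2*(zhat p τ c))),
      integral_const_mul _ _, integral_const_mul _ _]
  have hzv : zhat p τ c
      = (∫ z : ℝ, z * p z * gaussianPDF z c τ) / (∫ z : ℝ, p z * gaussianPDF z c τ) := rfl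
  have hZfun : Zfun p τ c = ∫ z : ℝ, p z * gaussianPDF z c τ := rfl
  have hzne' : (∫ z : ℝ, p z * gaussianPDF z c τ) ≠ 0 := hZfun ▸ hzne
  have h1 : HasDerivAt (fun c : ℝ => zhat p τ c) (tauZ p τ c / τ) c := by
    unfold zhat Zfun
    refine hDiv.congr_deriv ?_
    unfold tauZ
    rw [hZfun, hexp, hzv]
    field_simp
    ring
  refine ⟨h1, ?_⟩
  have h2 := (h1.sub (hasDerivAt_id c)).div_const τ
  refine h2.congr_deriv ?_
  field_simp
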